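/- In the adjoint Lie algebra of M_{1,1}(E) over a field of characteristic p > 2, the identity [x,z,u^(p),v] = 0 holds for all elements (u repeated p times, left-normalized). -/

import Mathlib

/-- The Grassmann (exterior) algebra over `F` on countably many generators. -/
abbrev GrAlg (F : Type) [Field F] := ExteriorAlgebra F (ℕ →₀ F)

/-- The `i`-th Grassmann generator `e_i`. -/
noncomputable def gen (F : Type) [Field F] (i : ℕ) : GrAlg F :=
  ExteriorAlgebra.ι F (Finsupp.single i (1 : F))

/-- The submodule of generators (degree-one part). -/
noncomputable def grange (F : Type) [Field F] : Submodule F (GrAlg F) :=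
  LinearMap.range (ExteriorAlgebra.ι F : (ℕ →₀ F) →ₗ[F] GrAlg F)

/-- The even part `E^1_0` of the unital Grassmann algebra: span of `1` and
products of even length. -/
noncomputable def evenPart1 (F : Type) [Field F] : Submodule F (GrAlg F) :=
  ⨆ n : ℕ, (grange F) ^ (2 * n)

/-- The even part `E_0` of the non-unital Grassmann algebra: span of
products of even positive length. -/
noncomputable def evenPart (F : Type) [Field F] : Submodule F (GrAlg F) :=
  ⨆ n : ℕ, (grange F) ^ (2 * (n + 1))

/-- The odd part `E_1`: span of products of odd length. -/
noncomputable def oddPart (F : Type) [Field F] : Submodule F (GrAlg F) :=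
  ⨆ n : ℕ, (grange F) ^ (2 * n + 1)

/-- The set of matrices of `M_{1,1}`: diagonal entries in `D`, off-diagonal
entries in the odd part. -/
def M11carrier (F : Type) [Field F] (D : Submodule F (GrAlg F)) :
    Set (Matrix (Fin 2) (Fin 2) (GrAlg F)) :=
  {A | A 0 0 ∈ D ∧ A 1 1 ∈ D ∧ A 0 1 ∈ oddPart F ∧ A 1 0 ∈ oddPart F}

/-- Left-normalized Lie bracket (commutator in the matrix ring):
`lnb x [a₁,…,aₙ] = [[…[x,a₁],…],aₙ]`. -/
def lnb {L : Type*} [LieRing L] (x : L) (l : List L) : L :=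
  l.foldl (fun a b => ⁅a, b⁆) x

attribute [local instance] LieRing.ofAssociativeRing

set_option maxHeartbeats 1000000

open Pointwise

section GrassmannAux
variable {F : Type} [Field F]

lemma grange_eq_span :
    grange F = Submodule.span F (Set.range (ExteriorAlgebra.ι F (M := ℕ →₀ F))) := by
  apply le_antisymm
  · rintro x ⟨m, rfl⟩; exact Submodule.subset_span ⟨m, rfl⟩
  · rw [Submodule.span_le]; rintro x ⟨m, rfl⟩; exact ⟨m, rfl⟩

lemma grange_swap {a b : ExteriorAlgebra F (ℕ →₀ F)} (ha : a ∈ grange F) (hb : b ∈ grange F) :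
    a * b = -(b * a) := by
  obtain ⟨m, rfl⟩ := ha; obtain ⟨m', rfl⟩ := hb
  exact eq_neg_of_add_eq_zero_left (ExteriorAlgebra.ι_add_mul_swap m m')

lemma grange_pow_swap (n : ℕ) (x : ExteriorAlgebra F (ℕ →₀ F)) (hx : x ∈ grange F ^ n)
    (g : ExteriorAlgebra F (ℕ →₀ F)) (hg : g ∈ grange F) :
    g * x = (-1 : ℤ) ^ n • (x * g) := by
  induction hx using Submodule.pow_induction_on_left' with
  | algebraMap r => simp [Algebra.commutes]
  | add x y i hx hy ihx ihy => rw [mul_add, add_mul, ihx, ihy, smul_add]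
  | mem_mul m hm i x hx ih =>
      calc g * (m * x) = (g * m) * x := (mul_assoc _ _ _).symm
        _ = (-(m * g)) * x := by rw [grange_swap hg hm]
        _ = -(m * (g * x)) := by rw [neg_mul, mul_assoc]
        _ = -(m * ((-1 : ℤ) ^ i • (x * g))) := by rw [ih]
        _ = (-1 : ℤ) ^ (i + 1) • (m * x * g) := by
              rw [mul_smul_comm, ← neg_smul, pow_succ, mul_assoc]
              ring_nf

lemma pow_pow_swap (n m : ℕ) (x y : ExteriorAlgebra F (ℕ →₀ F)) (hx : x ∈ grange F ^ n)
    (hy : y ∈ grange F ^ m) : x * y = (-1 : ℤ) ^ (n * m) • (y * x) := by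
  induction hx using Submodule.pow_induction_on_left' with
  | algebraMap r => simp [Algebra.commutes]
  | add a b i ha hb iha ihb => rw [add_mul, mul_add, iha, ihb, smul_add]
  | mem_mul g hg i a ha ih =>
      calc (g * a) * y = g * (a * y) := mul_assoc _ _ _
        _ = g * ((-1 : ℤ) ^ (i * m) • (y * a)) := by rw [ih]
        _ = (-1 : ℤ) ^ (i * m) • ((g * y) * a) := by
              rw [mul_smul_comm, mul_assoc]
        _ = (-1 : ℤ) ^ (i * m) • (((-1 : ℤ) ^ m • (y * g)) * a) := by
              rw [grange_pow_swap m y hy g hg]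
        _ = (-1 : ℤ) ^ ((i + 1) * m) • (y * (g * a)) := by
              rw [smul_mul_assoc, smul_smul, ← pow_add, mul_assoc]
              ring_nf

lemma even_pow_central (n : ℕ) (x : ExteriorAlgebra F (ℕ →₀ F)) (hx : x ∈ grange F ^ (2 * n))
    (y : ExteriorAlgebra F (ℕ →₀ F)) : x * y = y * x := by
  induction y using ExteriorAlgebra.induction with
  | algebraMap r => exact (Algebra.commutes r x).symm
  | ι m =>
      rw [grange_pow_swap (2 * n) x hx _ ⟨m, rfl⟩, pow_mul]
      norm_num
  | mul a b iha ihb => rw [← mul_assoc, iha, mul_assoc, ihb, ← mul_assoc]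
  | add a b iha ihb => rw [mul_add, add_mul, iha, ihb]

lemma evenPart_central {x : ExteriorAlgebra F (ℕ →₀ F)} (hx : x ∈ evenPart F)
    (y : ExteriorAlgebra F (ℕ →₀ F)) : x * y = y * x := by
  refine Submodule.iSup_induction (motive := fun a => ∀ y, a * y = y * a)
    (fun n => grange F ^ (2 * (n + 1))) hx
    (fun n a ha => even_pow_central (n + 1) a ha) (by simp) ?_ y
  intro a b iha ihb y
  rw [add_mul, mul_add, iha, ihb]

private lemma powmem {n m : ℕ} {a b : ExteriorAlgebra F (ℕ →₀ F)} (ha : a ∈ grange F ^ n)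
    (hb : b ∈ grange F ^ m) : a * b ∈ grange F ^ (n + m) := by
  rw [pow_add]; exact Submodule.mul_mem_mul ha hb

lemma oddPart_mul_oddPart {a b : ExteriorAlgebra F (ℕ →₀ F)} (ha : a ∈ oddPart F)
    (hb : b ∈ oddPart F) : a * b ∈ evenPart F := by
  refine Submodule.iSup_induction (motive := fun a => ∀ b, b ∈ oddPart F → a * b ∈ evenPart F)
    (fun n => grange F ^ (2 * n + 1)) ha ?_ (by simp) ?_ b hb
  · intro n a ha b hb
    refine Submodule.iSup_induction (motive := fun b => a * b ∈ evenPart F)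
      (fun m => grange F ^ (2 * m + 1)) hb ?_ (by simp) ?_
    · intro m b hb
      refine Submodule.mem_iSup_of_mem (n + m) ?_
      have h := powmem ha hb
      rwa [show 2 * n + 1 + (2 * m + 1) = 2 * (n + m + 1) by ring] at h
    · intro u w hu hw; rw [mul_add]; exact add_mem hu hw
  · intro u w hu hw b hb; rw [add_mul]; exact add_mem (hu b hb) (hw b hb)

lemma evenPart_mul_oddPart {a b : ExteriorAlgebra F (ℕ →₀ F)} (ha : a ∈ evenPart F)
    (hb : b ∈ oddPart F) : a * b ∈ oddPart F := by
  refine Submodule.iSup_induction (motive := fun a => ∀ b, b ∈ oddPart F → a * b ∈ oddPart F)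
    (fun n => grange F ^ (2 * (n + 1))) ha ?_ (by simp) ?_ b hb
  · intro n a ha b hb
    refine Submodule.iSup_induction (motive := fun b => a * b ∈ oddPart F)
      (fun m => grange F ^ (2 * m + 1)) hb ?_ (by simp) ?_
    · intro m b hb
      refine Submodule.mem_iSup_of_mem (n + m + 1) ?_
      have h := powmem ha hb
      rwa [show 2 * (n + 1) + (2 * m + 1) = 2 * (n + m + 1) + 1 by ring] at h
    · intro u w hu hw; rw [mul_add]; exact add_mem hu hw
  · intro u w hu hw b hb; rw [add_mul]; exact add_mem (hu b hb) (hw b hb)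

lemma oddPart_mul_evenPart {a b : ExteriorAlgebra F (ℕ →₀ F)} (ha : a ∈ oddPart F)
    (hb : b ∈ evenPart F) : a * b ∈ oddPart F := by
  rw [← evenPart_central hb a]
  exact evenPart_mul_oddPart hb ha

lemma oddPart_swap {a b : ExteriorAlgebra F (ℕ →₀ F)} (ha : a ∈ oddPart F)
    (hb : b ∈ oddPart F) : a * b = -(b * a) := by
  refine Submodule.iSup_induction (motive := fun a => ∀ b, b ∈ oddPart F → a * b = -(b * a))
    (fun n => grange F ^ (2 * n + 1)) ha ?_ (by simp) ?_ b hb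
  · intro n a ha b hb
    refine Submodule.iSup_induction (motive := fun b => a * b = -(b * a))
      (fun m => grange F ^ (2 * m + 1)) hb ?_ (by simp) ?_
    · intro m b hb
      rw [pow_pow_swap _ _ a b ha hb,
        show (2 * n + 1) * (2 * m + 1) = 2 * (2 * n * m + n + m) + 1 by ring,
        pow_succ, pow_mul]
      norm_num
    · intro u w hu hw; rw [mul_add, add_mul, hu, hw, neg_add]
  · intro u w hu hw b hb; rw [add_mul, mul_add, hu b hb, hw b hb, neg_add]

lemma setpow_subset (k : ℕ) {y : ExteriorAlgebra F (ℕ →₀ F)}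
    (hy : y ∈ ((Set.range (ExteriorAlgebra.ι F (M := ℕ →₀ F))) ^ k : Set _)) :
    y ∈ grange F ^ k := by
  rw [grange_eq_span, Submodule.span_pow]
  exact Submodule.subset_span hy

lemma setpow_sq_zero : ∀ (k : ℕ) (y : ExteriorAlgebra F (ℕ →₀ F)),
    y ∈ ((Set.range (ExteriorAlgebra.ι F (M := ℕ →₀ F))) ^ (k + 1) : Set _) → y * y = 0 := by
  intro k
  induction k with
  | zero =>
      intro y hy
      rw [pow_one] at hy
      obtain ⟨m, rfl⟩ := hy
      exact ExteriorAlgebra.ι_sq_zero m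
  | succ k ih =>
      intro y hy
      rw [pow_succ] at hy
      obtain ⟨a, ha, g, hg, rfl⟩ := Set.mem_mul.mp hy
      have hgr : g ∈ grange F := by obtain ⟨m, rfl⟩ := hg; exact ⟨m, rfl⟩
      have hg2 : g * g = 0 := by obtain ⟨m, rfl⟩ := hg; exact ExteriorAlgebra.ι_sq_zero m
      have hga : g * a = (-1 : ℤ) ^ (k + 1) • (a * g) :=
        grange_pow_swap (k + 1) a (setpow_subset _ ha) g hgr
      calc a * g * (a * g) = a * ((g * a) * g) := by rw [mul_assoc, ← mul_assoc g a g]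
        _ = a * (((-1 : ℤ) ^ (k + 1) • (a * g)) * g) := by rw [hga]
        _ = (-1 : ℤ) ^ (k + 1) • (a * (a * (g * g))) := by
              rw [smul_mul_assoc, mul_smul_comm, mul_assoc]
        _ = 0 := by rw [hg2]; simp

lemma evenPart_pow_p (p : ℕ) [Fact p.Prime] [CharP (ExteriorAlgebra F (ℕ →₀ F)) p]
    {x : ExteriorAlgebra F (ℕ →₀ F)} (hx : x ∈ evenPart F) : x ^ p = 0 := by
  have hp2 : 2 ≤ p := (Fact.out : p.Prime).two_le
  have hp0 : p ≠ 0 := (Fact.out : p.Prime).ne_zero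
  suffices h : x ∈ evenPart F ∧ x ^ p = 0 from h.2
  refine Submodule.iSup_induction (motive := fun a => a ∈ evenPart F ∧ a ^ p = 0)
    (fun n => grange F ^ (2 * (n + 1))) hx ?_ ⟨zero_mem _, zero_pow hp0⟩ ?_
  · intro n a ha
    have ha' : a ∈ grange F ^ (2 * (n + 1)) := ha
    rw [grange_eq_span, Submodule.span_pow] at ha'
    refine Submodule.span_induction (p := fun a _ => a ∈ evenPart F ∧ a ^ p = 0) ?_
      ⟨zero_mem _, zero_pow hp0⟩ ?_ ?_ ha'
    · intro y hy
      have hy' : y ∈ ((Set.range (ExteriorAlgebra.ι F (M := ℕ →₀ F))) ^ (2 * n + 1 + 1) : Set _) := by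
        rwa [show 2 * n + 1 + 1 = 2 * (n + 1) by ring]
      have hsq : y * y = 0 := setpow_sq_zero (2 * n + 1) y hy'
      have hmem : y ∈ evenPart F := Submodule.mem_iSup_of_mem n (setpow_subset _ hy)
      refine ⟨hmem, ?_⟩
      have : y ^ p = y ^ (p - 2) * (y * y) := by
        rw [← pow_two, ← pow_add]
        congr 1
        omega
      rw [this, hsq, mul_zero]
    · intro u w _ _ hu hw
      exact ⟨add_mem hu.1 hw.1, by
        rw [add_pow_char_of_commute p (evenPart_central hu.1 w), hu.2, hw.2, add_zero]⟩
    · intro c y _ hy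
      exact ⟨Submodule.smul_mem _ _ hy.1, by rw [smul_pow, hy.2, smul_zero]⟩
  · intro u w hu hw
    exact ⟨add_mem hu.1 hw.1, by
      rw [add_pow_char_of_commute p (evenPart_central hu.1 w), hu.2, hw.2, add_zero]⟩

lemma lie_entry {R : Type*} [Ring R] (A B : Matrix (Fin 2) (Fin 2) R) (i j : Fin 2) :
    ⁅A, B⁆ i j = A i 0 * B 0 j + A i 1 * B 1 j - (B i 0 * A 0 j + B i 1 * A 1 j) := by
  simp [Ring.lie_def, Matrix.sub_apply, Matrix.mul_apply, Fin.sum_univ_two]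

lemma evenPart_pow_mul_oddPart {a : GrAlg F} (ha : a ∈ evenPart F) :
    ∀ (k : ℕ) {b : GrAlg F}, b ∈ oddPart F → a ^ k * b ∈ oddPart F := by
  intro k
  induction k with
  | zero => intro b hb; rwa [pow_zero, one_mul]
  | succ k ih =>
      intro b hb
      rw [pow_succ, mul_assoc]
      exact ih (evenPart_mul_oddPart ha hb)


end GrassmannAux

/-- In the adjoint Lie algebra of `M_{1,1}(E)` over a field of characteristic
`p > 2`, the identity `[x,z,u^(p),v] = 0` holds. -/
theorem stmt17 (F : Type) [Field F] (p : ℕ) (hp : 2 < p) [CharP F p]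
    (x z u v : Matrix (Fin 2) (Fin 2) (GrAlg F))
    (hx : x ∈ M11carrier F (evenPart F)) (hz : z ∈ M11carrier F (evenPart F))
    (hu : u ∈ M11carrier F (evenPart F)) (hv : v ∈ M11carrier F (evenPart F)) :
    lnb ⁅x, z⁆ (List.replicate p u ++ [v]) = 0 := by

  obtain ⟨hx00, hx11, hx01, hx10⟩ := hx
  obtain ⟨hz00, hz11, hz01, hz10⟩ := hz
  obtain ⟨hu00, hu11, hu01, hu10⟩ := hu
  obtain ⟨hv00, hv11, hv01, hv10⟩ := hv
  have hprime : p.Prime := by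
    rcases CharP.char_is_prime_or_zero F p with h | h
    · exact h
    · omega
  haveI : Fact p.Prime := ⟨hprime⟩
  haveI : CharP (GrAlg F) p :=
    charP_of_injective_algebraMap (ExteriorAlgebra.algebraMap_leftInverse (ℕ →₀ F)).injective p
  set δ : GrAlg F := u 1 1 - u 0 0 with hδdef
  have hδ : δ ∈ evenPart F := sub_mem hu11 hu00
  have hδ' : -δ ∈ evenPart F := neg_mem hδ
  set β : GrAlg F := ⁅x, z⁆ 0 1 with hβdef
  set γ : GrAlg F := ⁅x, z⁆ 1 0 with hγdef
  have hβ : β ∈ oddPart F := by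
    rw [hβdef, lie_entry]
    exact sub_mem (add_mem (evenPart_mul_oddPart hx00 hz01) (oddPart_mul_evenPart hx01 hz11))
      (add_mem (evenPart_mul_oddPart hz00 hx01) (oddPart_mul_evenPart hz01 hx11))
  have hγ : γ ∈ oddPart F := by
    rw [hγdef, lie_entry]
    exact sub_mem (add_mem (oddPart_mul_evenPart hx10 hz00) (evenPart_mul_oddPart hx11 hz10))
      (add_mem (oddPart_mul_evenPart hz10 hx00) (evenPart_mul_oddPart hz11 hx10))
  -- the invariant
  have key : ∀ k : ℕ, ∃ s : GrAlg F, s ∈ evenPart F ∧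
      lnb ⁅x, z⁆ (List.replicate k u) 0 0 = s ∧
      lnb ⁅x, z⁆ (List.replicate k u) 1 1 = s ∧
      lnb ⁅x, z⁆ (List.replicate k u) 0 1 = δ ^ k * β ∧
      lnb ⁅x, z⁆ (List.replicate k u) 1 0 = (-δ) ^ k * γ := by
    intro k
    induction k with
    | zero =>
        refine ⟨x 0 1 * z 1 0 - z 0 1 * x 1 0,
          sub_mem (oddPart_mul_oddPart hx01 hz10) (oddPart_mul_oddPart hz01 hx10), ?_, ?_, ?_, ?_⟩
        · show ⁅x, z⁆ 0 0 = _
          rw [lie_entry, evenPart_central hx00 (z 0 0)]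
          abel
        · show ⁅x, z⁆ 1 1 = _
          rw [lie_entry, evenPart_central hx11 (z 1 1), oddPart_swap hx10 hz01,
            oddPart_swap hz10 hx01]
          abel
        · show ⁅x, z⁆ 0 1 = _
          rw [pow_zero, one_mul]
        · show ⁅x, z⁆ 1 0 = _
          rw [pow_zero, one_mul]
    | succ k ih =>
        obtain ⟨s, hsmem, h00, h11, h01, h10⟩ := ih
        have hs : ∀ y, s * y = y * s := evenPart_central hsmem
        have hstep : lnb ⁅x, z⁆ (List.replicate (k + 1) u)
            = ⁅lnb ⁅x, z⁆ (List.replicate k u), u⁆ := by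
          rw [List.replicate_succ']
          simp [lnb, List.foldl_append]
        set A := lnb ⁅x, z⁆ (List.replicate k u) with hA
        have hδkβ : δ ^ k * β ∈ oddPart F := evenPart_pow_mul_oddPart hδ k hβ
        have hδkγ : (-δ) ^ k * γ ∈ oddPart F := evenPart_pow_mul_oddPart hδ' k hγ
        refine ⟨δ ^ k * β * u 1 0 - u 0 1 * ((-δ) ^ k * γ),
          sub_mem (oddPart_mul_oddPart hδkβ hu10) (oddPart_mul_oddPart hu01 hδkγ),
          ?_, ?_, ?_, ?_⟩
        · rw [hstep, lie_entry, h00, h01, h10, hs (u 0 0)]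
          abel
        · rw [hstep, lie_entry, h11, h01, h10, hs (u 1 1), oddPart_swap hδkβ hu10,
            oddPart_swap hu01 hδkγ]
          abel
        · rw [hstep, lie_entry, h00, h11, h01, hs (u 0 1)]
          have hmain : (δ ^ k * β) * u 1 1 - u 0 0 * (δ ^ k * β) = δ ^ (k + 1) * β := by
            calc (δ ^ k * β) * u 1 1 - u 0 0 * (δ ^ k * β)
                = δ ^ k * (β * u 1 1) - (u 0 0 * δ ^ k) * β := by
                  rw [mul_assoc, mul_assoc]
              _ = δ ^ k * (u 1 1 * β) - (δ ^ k * u 0 0) * β := by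
                  rw [← evenPart_central hu11 β, evenPart_central hu00 (δ ^ k)]
              _ = δ ^ k * (u 1 1 * β) - δ ^ k * (u 0 0 * β) := by rw [mul_assoc]
              _ = δ ^ k * ((u 1 1 - u 0 0) * β) := by rw [sub_mul, mul_sub]
              _ = δ ^ (k + 1) * β := by rw [← hδdef, pow_succ, mul_assoc]
          rw [← hmain]
          abel
        · rw [hstep, lie_entry, h00, h11, h10, hs (u 1 0)]
          have hmain : ((-δ) ^ k * γ) * u 0 0 - u 1 1 * ((-δ) ^ k * γ)
              = (-δ) ^ (k + 1) * γ := by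
            calc ((-δ) ^ k * γ) * u 0 0 - u 1 1 * ((-δ) ^ k * γ)
                = (-δ) ^ k * (γ * u 0 0) - (u 1 1 * (-δ) ^ k) * γ := by
                  rw [mul_assoc, mul_assoc]
              _ = (-δ) ^ k * (u 0 0 * γ) - ((-δ) ^ k * u 1 1) * γ := by
                  rw [← evenPart_central hu00 γ, evenPart_central hu11 ((-δ) ^ k)]
              _ = (-δ) ^ k * (u 0 0 * γ) - (-δ) ^ k * (u 1 1 * γ) := by rw [mul_assoc]
              _ = (-δ) ^ k * ((u 0 0 - u 1 1) * γ) := by rw [sub_mul, mul_sub]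
              _ = (-δ) ^ (k + 1) * γ := by
                  rw [show u 0 0 - u 1 1 = -δ by rw [hδdef]; abel, pow_succ, mul_assoc]
          rw [← hmain]
          abel
  obtain ⟨s, hsmem, h00, h11, h01, h10⟩ := key p
  have hs : ∀ y, s * y = y * s := evenPart_central hsmem
  have hδp : δ ^ p = 0 := evenPart_pow_p p hδ
  have h01' : lnb ⁅x, z⁆ (List.replicate p u) 0 1 = 0 := by rw [h01, hδp, zero_mul]
  have h10' : lnb ⁅x, z⁆ (List.replicate p u) 1 0 = 0 := by
    rw [h10, Odd.neg_pow (hprime.odd_of_ne_two (by omega)), hδp, neg_zero, zero_mul]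
  have hlast : lnb ⁅x, z⁆ (List.replicate p u ++ [v])
      = ⁅lnb ⁅x, z⁆ (List.replicate p u), v⁆ := by
    simp [lnb, List.foldl_append]
  rw [hlast]
  set M := lnb ⁅x, z⁆ (List.replicate p u) with hM
  have e00 : ⁅M, v⁆ 0 0 = 0 := by
    rw [lie_entry]
    simp only [h00, h01', h10', zero_mul, mul_zero, add_zero, zero_add, hs, sub_self]
  have e01 : ⁅M, v⁆ 0 1 = 0 := by
    rw [lie_entry]
    simp only [h00, h11, h01', zero_mul, mul_zero, add_zero, zero_add, hs, sub_self]
  have e10 : ⁅M, v⁆ 1 0 = 0 := by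
    rw [lie_entry]
    simp only [h00, h11, h10', zero_mul, mul_zero, add_zero, zero_add, hs, sub_self]
  have e11 : ⁅M, v⁆ 1 1 = 0 := by
    rw [lie_entry]
    simp only [h11, h01', h10', zero_mul, mul_zero, add_zero, zero_add, hs, sub_self]
  ext i j
  fin_cases i <;> fin_cases j
  · exact e00
  · exact e01
  · exact e10
  · exact e11
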